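/- Let α, β, δ > 0 with β > δ. Set D = βα + βδ + δ², I₁* = α(β−δ)/D, I₂* = δ(β−δ)/D. Define F(I₁, I₂) = β(1 − I₁ − I₂)I₁/(1 + I₂) − δI₁. Then the partial derivative of F with respect to I₁ at the point (I₁*, I₂*), i.e. the derivative at I₁* of the map I₁ ↦ F(I₁, I₂*), equals α(δ−β)/(α+2δ). -/

import Mathlib

theorem phenomenological_J11_partial_derivative
    (α β δ : ℝ) (hα : 0 < α) (hβ : 0 < β) (hδ : 0 < δ) (hβδ : β > δ)
    (D : ℝ) (hD : D = β * α + β * δ + δ ^ 2)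
    (I₁ I₂ : ℝ)
    (hI₁ : I₁ = α * (β - δ) / D)
    (hI₂ : I₂ = δ * (β - δ) / D)
    (F : ℝ → ℝ → ℝ)
    (hF : ∀ x y, F x y = β * (1 - x - y) * x / (1 + y) - δ * x) :
    HasDerivAt (fun x => F x I₂) (α * (δ - β) / (α + 2 * δ)) I₁ := by
  have hDpos : 0 < D := by rw [hD]; positivity
  have hI₂pos : 0 < I₂ := by
    rw [hI₂]; exact div_pos (mul_pos hδ (sub_pos.mpr hβδ)) hDpos
  have h1I₂ : (1 : ℝ) + I₂ ≠ 0 := by positivity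
  have h1 : HasDerivAt (fun x : ℝ => β * (1 - x - I₂) * x)
      ((β * (0 - 1 - 0)) * I₁ + (β * (1 - I₁ - I₂)) * 1) I₁ := by
    have ha : HasDerivAt (fun x : ℝ => β * (1 - x - I₂)) (β * (0 - 1 - 0)) I₁ := by
      exact (((hasDerivAt_const I₁ (1:ℝ)).sub (hasDerivAt_id I₁)).sub
        (hasDerivAt_const I₁ I₂)).const_mul β
    exact ha.mul (hasDerivAt_id I₁)
  have h2 := (h1.div_const (1 + I₂)).sub ((hasDerivAt_id I₁).const_mul δ)
  have heq : ∀ x : ℝ, F x I₂ = β * (1 - x - I₂) * x / (1 + I₂) - δ * x := fun x => hF x I₂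
  have hfun : (fun x => F x I₂) = fun x => β * (1 - x - I₂) * x / (1 + I₂) - δ * x :=
    funext heq
  rw [hfun]
  convert h2 using 1
  case e'_4 => rfl
  case e'_5 => rfl
  case e'_8 => rfl
  have hDne : D ≠ 0 := hDpos.ne'
  have hα2δ : α + 2 * δ ≠ 0 := by positivity
  have hsum : 1 + I₂ = β * (α + 2 * δ) / D := by
    rw [hI₂, hD]; field_simp; ring
  rw [hsum, hI₁, hI₂]
  have hβα2δ : β * (α + 2 * δ) ≠ 0 := by positivity
  field_simp
  rw [hD]; ring
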